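/- Let N ≥ 1 and let E : Fin N → Fin N → Prop satisfy E a a for every a. If C_1, …, C_m are elementary cycles of the digraph E whose vertex sets are pairwise disjoint, then the permutation of Fin N which acts as the cyclic shift along each C_r on the vertices of C_r and as the identity on all remaining vertices is a perfect matching of E. -/

import Mathlib

/-- If every vertex of the digraph `E` on `Fin N` has a loop, and
`L 0, …, L (m-1)` are elementary cycles of `E` with pairwise disjoint vertex sets, then
the permutation `σ` that acts as the cyclic shift along each cycle and as the identity on
all remaining vertices is a perfect matching of `E`. -/
theorem lqn_disjoint_cycles_give_pm (N m : ℕ) (hN : 1 ≤ N)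
    (E : Fin N → Fin N → Prop) (hloop : ∀ a, E a a)
    (L : Fin m → List (Fin N))
    (hnd : ∀ r, (L r).Nodup)
    (hne : ∀ r, L r ≠ [])
    (hchain : ∀ r, (L r).Chain' E)
    (hcyc : ∀ r, E ((L r).getLast (hne r)) ((L r).head (hne r)))
    (hdisj : ∀ r s, r ≠ s → ∀ a : Fin N, a ∈ L r → a ∉ L s)
    (σ : Equiv.Perm (Fin N))
    (hshift : ∀ r (q : ℕ) (hq : q < (L r).length),
      σ ((L r).get ⟨q, hq⟩) =
        (L r).get ⟨(q + 1) % (L r).length,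
          Nat.mod_lt _ (List.length_pos_iff.mpr (hne r))⟩)
    (hfix : ∀ a : Fin N, (∀ r, a ∉ L r) → σ a = a) :
    ∀ a : Fin N, E a (σ a) := by
  intro a
  by_cases h : ∃ r, a ∈ L r
  · obtain ⟨r, ha⟩ := h
    obtain ⟨⟨q, hq⟩, rfl⟩ := List.mem_iff_get.mp ha
    rw [hshift r q hq]
    by_cases hlt : q + 1 < (L r).length
    · have := (List.isChain_iff_getElem.mp (hchain r)) q (by omega)
      simpa [Nat.mod_eq_of_lt hlt] using this
    · have hq1 : q + 1 = (L r).length := le_antisymm hq (not_lt.mp hlt)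
      have h0 : (q + 1) % (L r).length = 0 := by rw [hq1]; simp
      have hlast : (L r).get ⟨q, hq⟩ = (L r).getLast (hne r) := by
        have hq' : q = (L r).length - 1 := by omega
        subst hq'
        simp [List.getLast_eq_getElem]
      have hhead : (L r).get ⟨(q + 1) % (L r).length,
          Nat.mod_lt _ (List.length_pos_iff.mpr (hne r))⟩ = (L r).head (hne r) := by
        simp only [h0]
        exact List.get_mk_zero _
      rw [hlast, hhead]
      exact hcyc r
  · push_neg at h
    rw [hfix a h]
    exact hloop a
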